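/- For all i, j ∈ {0, 1, …, m} with |i − j| > 1 and {i, j} ≠ {0, m}, the Fiedler matrices of the system matrix S commute: 𝕄_i 𝕄_j = 𝕄_j 𝕄_i. -/

import Mathlib

open Matrix
open Fin.NatCast

noncomputable section

/-- The matrix polynomial `P(λ) = A_0 + λ A_1 + ⋯ + λ^m A_m` evaluated at `lam`. -/
def PEval (m n : ℕ) (A : Fin (m + 1) → Matrix (Fin n) (Fin n) ℂ) (lam : ℂ) :
    Matrix (Fin n) (Fin n) ℂ :=
  ∑ j : Fin (m + 1), lam ^ (j : ℕ) • A j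

/-- `P` is regular: `det P(λ)` is not identically zero. -/
def Regular (m n : ℕ) (A : Fin (m + 1) → Matrix (Fin n) (Fin n) ℂ) : Prop :=
  ∃ lam : ℂ, (PEval m n A lam).det ≠ 0

/-- The Fiedler matrix `M_i` of `P`, an `nm × nm` matrix indexed blockwise by `Fin m × Fin n`
(block row `0` is the top block row). -/
def FM (m n : ℕ) (A : Fin (m + 1) → Matrix (Fin n) (Fin n) ℂ) (i : ℕ) :
    Matrix (Fin m × Fin n) (Fin m × Fin n) ℂ :=
  Matrix.of fun p q =>
    (if i = 0 then
      if p.1 = q.1 then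
        (if (p.1 : ℕ) = m - 1 then -A 0 else (1 : Matrix (Fin n) (Fin n) ℂ)) else 0
    else if i = m then
      if p.1 = q.1 then (if (p.1 : ℕ) = 0 then A (m : Fin (m + 1)) else 1) else 0
    else
      if (p.1 : ℕ) = m - i - 1 ∧ (q.1 : ℕ) = m - i - 1 then -A (i : Fin (m + 1))
      else if (p.1 : ℕ) = m - i - 1 ∧ (q.1 : ℕ) = m - i then 1
      else if (p.1 : ℕ) = m - i ∧ (q.1 : ℕ) = m - i - 1 then 1
      else if (p.1 : ℕ) = m - i ∧ (q.1 : ℕ) = m - i then 0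
      else if p.1 = q.1 then 1 else 0) p.2 q.2

/-- `e_j ⊗ B` (with `j` 1-indexed): the `nm × r` block column matrix with `B` in block row `j`. -/
def eB (m n r : ℕ) (j : ℕ) (B : Matrix (Fin n) (Fin r) ℂ) :
    Matrix (Fin m × Fin n) (Fin r) ℂ :=
  Matrix.of fun p q => if (p.1 : ℕ) + 1 = j then B p.2 q else 0

/-- `e_j^T ⊗ C` (with `j` 1-indexed): the `r × nm` block row matrix with `C` in block column `j`. -/
def eC (m n r : ℕ) (j : ℕ) (C : Matrix (Fin r) (Fin n) ℂ) :
    Matrix (Fin r) (Fin m × Fin n) ℂ :=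
  Matrix.of fun q p => if (p.1 : ℕ) + 1 = j then C q p.2 else 0

/-- `M_σ = M_{σ⁻¹(1)} M_{σ⁻¹(2)} ⋯ M_{σ⁻¹(m)}` (here positions are 0-indexed: `σ i` is the
0-indexed position of the factor `M_i`). -/
def Mperm (m n : ℕ) (A : Fin (m + 1) → Matrix (Fin n) (Fin n) ℂ) (σ : Equiv.Perm (Fin m)) :
    Matrix (Fin m × Fin n) (Fin m × Fin n) ℂ :=
  (List.ofFn fun j : Fin m => FM m n A ((σ.symm j : Fin m) : ℕ)).prod

/-- The Fiedler pencil `L_σ(λ) = λ M_m − M_σ` of `P` evaluated at `lam`. -/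
def LP (m n : ℕ) (A : Fin (m + 1) → Matrix (Fin n) (Fin n) ℂ) (σ : Equiv.Perm (Fin m))
    (lam : ℂ) : Matrix (Fin m × Fin n) (Fin m × Fin n) ℂ :=
  lam • FM m n A m - Mperm m n A σ

/-- `σ` has a consecution at `d` (i.e. `σ(d) < σ(d+1)`). -/
def ConsAt (m : ℕ) (σ : Equiv.Perm (Fin m)) (d : ℕ) : Prop :=
  ∃ h : d + 1 < m, (σ ⟨d, Nat.lt_of_succ_lt h⟩ : ℕ) < (σ ⟨d + 1, h⟩ : ℕ)

/-- `σ` has an inversion at `d` (i.e. `σ(d) > σ(d+1)`). -/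
def InvAt (m : ℕ) (σ : Equiv.Perm (Fin m)) (d : ℕ) : Prop :=
  ∃ h : d + 1 < m, (σ ⟨d + 1, h⟩ : ℕ) < (σ ⟨d, Nat.lt_of_succ_lt h⟩ : ℕ)

/-- `c1` is the number of initial consecutive consecutions of `σ` (the first entry of CISS(σ)). -/
def IsC1 (m : ℕ) (σ : Equiv.Perm (Fin m)) (c1 : ℕ) : Prop :=
  (∀ d < c1, ConsAt m σ d) ∧ ¬ ConsAt m σ c1

/-- `i1` is the number of consecutive inversions of `σ` at `c1, …, c1 + i1 − 1`
(the second entry of CISS(σ)). -/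
def IsI1 (m : ℕ) (σ : Equiv.Perm (Fin m)) (c1 i1 : ℕ) : Prop :=
  (∀ d, c1 ≤ d → d < c1 + i1 → InvAt m σ d) ∧ ¬ InvAt m σ (c1 + i1)

/-- The system matrix `S(λ) = [[−P(λ), B], [C, D]]` evaluated at `lam`. -/
def SMat (m n r : ℕ) (A : Fin (m + 1) → Matrix (Fin n) (Fin n) ℂ)
    (B : Matrix (Fin n) (Fin r) ℂ) (C : Matrix (Fin r) (Fin n) ℂ) (D : Matrix (Fin r) (Fin r) ℂ)
    (lam : ℂ) : Matrix (Fin n ⊕ Fin r) (Fin n ⊕ Fin r) ℂ :=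
  Matrix.fromBlocks (-(PEval m n A lam)) B C D

/-- The Fiedler pencil `𝕊_σ(λ)` of the system matrix, evaluated at `lam`:
`[[−L_σ(λ), e_m ⊗ B], [e_{m−c1}^T ⊗ C, D]]` if `c1 > 0`, and
`[[−L_σ(λ), e_{m−i1} ⊗ B], [e_m^T ⊗ C, D]]` if `c1 = 0`. -/
def SP (m n r : ℕ) (A : Fin (m + 1) → Matrix (Fin n) (Fin n) ℂ)
    (B : Matrix (Fin n) (Fin r) ℂ) (C : Matrix (Fin r) (Fin n) ℂ) (D : Matrix (Fin r) (Fin r) ℂ)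
    (σ : Equiv.Perm (Fin m)) (c1 i1 : ℕ) (lam : ℂ) :
    Matrix ((Fin m × Fin n) ⊕ Fin r) ((Fin m × Fin n) ⊕ Fin r) ℂ :=
  if 0 < c1 then
    Matrix.fromBlocks (-(LP m n A σ lam)) (eB m n r m B) (eC m n r (m - c1) C) D
  else
    Matrix.fromBlocks (-(LP m n A σ lam)) (eB m n r (m - i1) B) (eC m n r m C) D

/-- The Fiedler matrices `𝕄_i` of the system matrix `S(λ)`. -/
def SFM (m n r : ℕ) (A : Fin (m + 1) → Matrix (Fin n) (Fin n) ℂ)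
    (B : Matrix (Fin n) (Fin r) ℂ) (C : Matrix (Fin r) (Fin n) ℂ) (D : Matrix (Fin r) (Fin r) ℂ)
    (i : ℕ) : Matrix ((Fin m × Fin n) ⊕ Fin r) ((Fin m × Fin n) ⊕ Fin r) ℂ :=
  if i = 0 then Matrix.fromBlocks (FM m n A 0) (-(eB m n r m B)) (-(eC m n r m C)) (-D)
  else if i = m then Matrix.fromBlocks (FM m n A m) 0 0 0
  else Matrix.fromBlocks (FM m n A i) 0 0 1

/-- `w = (w0, w1)` is a proper permutation of `{0, 1, …, m}`. -/
def ProperPerm (m : ℕ) (w0 w1 : List ℕ) : Prop :=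
  List.Perm (w0 ++ w1) (List.range (m + 1)) ∧ 0 ∈ w0 ∧ m ∈ w1

/-- `M̂_{w0}`: the product of the Fiedler matrices of `P` in the order listed in `w0`. -/
def hatM0 (m n : ℕ) (A : Fin (m + 1) → Matrix (Fin n) (Fin n) ℂ) (w0 : List ℕ) :
    Matrix (Fin m × Fin n) (Fin m × Fin n) ℂ :=
  (w0.map (FM m n A)).prod

/-- `M̂_{w1} = M_{i1}⁻¹ ⋯ M_{ip}⁻¹ M_m M_{j1}⁻¹ ⋯ M_{jq}⁻¹` for `w1 = (i1,…,ip,m,j1,…,jq)`. -/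
def hatM1 (m n : ℕ) (A : Fin (m + 1) → Matrix (Fin n) (Fin n) ℂ) (w1 : List ℕ) :
    Matrix (Fin m × Fin n) (Fin m × Fin n) ℂ :=
  (w1.map (fun i => if i = m then FM m n A m else (FM m n A i)⁻¹)).prod

/-- The PGF pencil `K_w(λ) = λ M̂_{w1} − M̂_{w0}` of `P`, evaluated at `lam`. -/
def KP (m n : ℕ) (A : Fin (m + 1) → Matrix (Fin n) (Fin n) ℂ) (w0 w1 : List ℕ) (lam : ℂ) :
    Matrix (Fin m × Fin n) (Fin m × Fin n) ℂ :=
  lam • hatM1 m n A w1 - hatM0 m n A w0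

/-- `𝕄̂_{w0}` for the system Fiedler matrices. -/
def hatS0 (m n r : ℕ) (A : Fin (m + 1) → Matrix (Fin n) (Fin n) ℂ)
    (B : Matrix (Fin n) (Fin r) ℂ) (C : Matrix (Fin r) (Fin n) ℂ) (D : Matrix (Fin r) (Fin r) ℂ)
    (w0 : List ℕ) : Matrix ((Fin m × Fin n) ⊕ Fin r) ((Fin m × Fin n) ⊕ Fin r) ℂ :=
  (w0.map (SFM m n r A B C D)).prod

/-- `𝕄̂_{w1}` for the system Fiedler matrices. -/
def hatS1 (m n r : ℕ) (A : Fin (m + 1) → Matrix (Fin n) (Fin n) ℂ)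
    (B : Matrix (Fin n) (Fin r) ℂ) (C : Matrix (Fin r) (Fin n) ℂ) (D : Matrix (Fin r) (Fin r) ℂ)
    (w1 : List ℕ) : Matrix ((Fin m × Fin n) ⊕ Fin r) ((Fin m × Fin n) ⊕ Fin r) ℂ :=
  (w1.map (fun i => if i = m then SFM m n r A B C D m else (SFM m n r A B C D i)⁻¹)).prod

/-- The PGF pencil `𝕂_w(λ) = λ 𝕄̂_{w1} − 𝕄̂_{w0}` of `G`, evaluated at `lam`. -/
def SKP (m n r : ℕ) (A : Fin (m + 1) → Matrix (Fin n) (Fin n) ℂ)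
    (B : Matrix (Fin n) (Fin r) ℂ) (C : Matrix (Fin r) (Fin n) ℂ) (D : Matrix (Fin r) (Fin r) ℂ)
    (w0 w1 : List ℕ) (lam : ℂ) :
    Matrix ((Fin m × Fin n) ⊕ Fin r) ((Fin m × Fin n) ⊕ Fin r) ℂ :=
  lam • hatS1 m n r A B C D w1 - hatS0 m n r A B C D w0

/-- The index tuple `w` has a consecution at `d`. -/
def LCons (w : List ℕ) (d : ℕ) : Prop :=
  d ∈ w ∧ d + 1 ∈ w ∧ w.idxOf d < w.idxOf (d + 1)

/-- The index tuple `w` has an inversion at `d`. -/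
def LInv (w : List ℕ) (d : ℕ) : Prop :=
  d ∈ w ∧ d + 1 ∈ w ∧ w.idxOf (d + 1) < w.idxOf d

/-- `CIP(w) = (c0, i0)`. -/
def IsCIP (w : List ℕ) (c0 i0 : ℕ) : Prop :=
  ((∀ d < c0, LCons w d) ∧ ¬ LCons w c0) ∧ ((∀ d < i0, LInv w d) ∧ ¬ LInv w i0)

/-- Block index of an index of an `(nm+r) × (nm+r)` matrix: the first `m` (diagonal) blocks
have size `n`, the last one size `r`. -/
def sIdx (m n r : ℕ) : (Fin m × Fin n) ⊕ Fin r → ℕ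
  | Sum.inl p => p.1
  | Sum.inr _ => m

/-- An `(nm+r) × (nm+r)` matrix has block bandwidth `k` (e.g. `k = 1`: block tridiagonal,
`k = 2`: block pentadiagonal). -/
def BlockBandS (m n r : ℕ) (k : ℕ)
    (M : Matrix ((Fin m × Fin n) ⊕ Fin r) ((Fin m × Fin n) ⊕ Fin r) ℂ) : Prop :=
  ∀ x y, (sIdx m n r x + k < sIdx m n r y ∨ sIdx m n r y + k < sIdx m n r x) → M x y = 0

/-- An `nm × nm` matrix has block bandwidth `k`. -/
def BlockBandP (m n : ℕ) (k : ℕ) (M : Matrix (Fin m × Fin n) (Fin m × Fin n) ℂ) : Prop :=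
  ∀ x y : Fin m × Fin n, ((x.1 : ℕ) + k < (y.1 : ℕ) ∨ (y.1 : ℕ) + k < (x.1 : ℕ)) → M x y = 0

/-- The degree-`k` Horner shift `P_k(λ) = A_{m−k} + λ A_{m−k+1} + ⋯ + λ^k A_m`. -/
def Horner (m n : ℕ) (A : Fin (m + 1) → Matrix (Fin n) (Fin n) ℂ) (k : Fin (m + 1)) (lam : ℂ) :
    Matrix (Fin n) (Fin n) ℂ :=
  ∑ j : Fin ((k : ℕ) + 1),
    lam ^ (j : ℕ) • A ⟨m - (k : ℕ) + (j : ℕ), by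
      have h1 := j.isLt; have h2 := k.isLt; omega⟩

/-- `N_1`: the zero-degree coefficient of the first companion pencil of `P`. -/
def N1 (m n : ℕ) (A : Fin (m + 1) → Matrix (Fin n) (Fin n) ℂ) :
    Matrix (Fin m × Fin n) (Fin m × Fin n) ℂ :=
  Matrix.of fun p q =>
    (if (p.1 : ℕ) = 0 then -A ((m - 1 - (q.1 : ℕ) : ℕ) : Fin (m + 1))
     else if (p.1 : ℕ) = (q.1 : ℕ) + 1 then (1 : Matrix (Fin n) (Fin n) ℂ)
     else 0) p.2 q.2

/-- `N_2`: the zero-degree coefficient of the second companion pencil of `P`. -/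
def N2 (m n : ℕ) (A : Fin (m + 1) → Matrix (Fin n) (Fin n) ℂ) :
    Matrix (Fin m × Fin n) (Fin m × Fin n) ℂ :=
  Matrix.of fun p q =>
    (if (q.1 : ℕ) = 0 then -A ((m - 1 - (p.1 : ℕ) : ℕ) : Fin (m + 1))
     else if (q.1 : ℕ) = (p.1 : ℕ) + 1 then (1 : Matrix (Fin n) (Fin n) ℂ)
     else 0) p.2 q.2

/-- The first companion form `C_1(λ) = [[−L_1(λ), e_1 ⊗ B], [e_m^T ⊗ C, D]]` of `S`. -/
def C1P (m n r : ℕ) (A : Fin (m + 1) → Matrix (Fin n) (Fin n) ℂ)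
    (B : Matrix (Fin n) (Fin r) ℂ) (C : Matrix (Fin r) (Fin n) ℂ) (D : Matrix (Fin r) (Fin r) ℂ)
    (lam : ℂ) : Matrix ((Fin m × Fin n) ⊕ Fin r) ((Fin m × Fin n) ⊕ Fin r) ℂ :=
  Matrix.fromBlocks (-(lam • FM m n A m - N1 m n A)) (eB m n r 1 B) (eC m n r m C) D

/-- The second companion form `C_2(λ) = [[−L_2(λ), e_m ⊗ B], [e_1^T ⊗ C, D]]` of `S`. -/
def C2P (m n r : ℕ) (A : Fin (m + 1) → Matrix (Fin n) (Fin n) ℂ)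
    (B : Matrix (Fin n) (Fin r) ℂ) (C : Matrix (Fin r) (Fin n) ℂ) (D : Matrix (Fin r) (Fin r) ℂ)
    (lam : ℂ) : Matrix ((Fin m × Fin n) ⊕ Fin r) ((Fin m × Fin n) ⊕ Fin r) ℂ :=
  Matrix.fromBlocks (-(lam • FM m n A m - N2 m n A)) (eB m n r m B) (eC m n r 1 C) D

/-- Two matrices which agree with the identity outside of disjoint block index sets commute. -/
lemma aux_comm {ι : Type*} [Fintype ι] [DecidableEq ι] (b : ι → ℕ)
    (S T : ℕ → Prop) (hdisj : ∀ x, ¬(S x ∧ T x))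
    (M N : Matrix ι ι ℂ)
    (hM : ∀ p q, (¬ S (b p) ∨ ¬ S (b q)) → M p q = if p = q then 1 else 0)
    (hN : ∀ p q, (¬ T (b p) ∨ ¬ T (b q)) → N p q = if p = q then 1 else 0) :
    M * N = N * M := by
  ext p q
  rw [Matrix.mul_apply, Matrix.mul_apply]
  by_cases hp : S (b p) <;> by_cases hq : S (b q)
  · have h1 : ∀ k, N k q = if k = q then (1:ℂ) else 0 :=
      fun k => hN k q (Or.inr fun h => hdisj _ ⟨hq, h⟩)
    have h2 : ∀ k, N p k = if p = k then (1:ℂ) else 0 :=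
      fun k => hN p k (Or.inl fun h => hdisj _ ⟨hp, h⟩)
    simp [h1, h2]
  · have hL : ∀ k, M p k * N k q = 0 := by
      intro k
      by_cases hk : S (b k)
      · rw [hN k q (Or.inl fun h => hdisj _ ⟨hk, h⟩), if_neg (fun h : k = q => hq (h ▸ hk)), mul_zero]
      · rw [hM p k (Or.inr hk), if_neg (fun h : p = k => hk (h ▸ hp)), zero_mul]
    have hR : ∀ k, N p k = if p = k then (1:ℂ) else 0 :=
      fun k => hN p k (Or.inl fun h => hdisj _ ⟨hp, h⟩)
    have e1 : ∑ k, M p k * N k q = 0 := Finset.sum_eq_zero fun k _ => hL k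
    have e2 : ∑ k, N p k * M k q = M p q := by simp [hR]
    rw [e1, e2, hM p q (Or.inr hq), if_neg fun h : p = q => hq (h ▸ hp)]
  · have hL : ∀ k, M p k = if p = k then (1:ℂ) else 0 := fun k => hM p k (Or.inl hp)
    have e1 : ∑ k, M p k * N k q = N p q := by simp [hL]
    have hR : ∀ k, N p k * M k q = 0 := by
      intro k
      by_cases hk : S (b k)
      · rw [hN p k (Or.inr fun h => hdisj _ ⟨hk, h⟩), if_neg (fun h : p = k => hp (h.symm ▸ hk)), zero_mul]
      · rw [hM k q (Or.inl hk), if_neg (fun h : k = q => hk (h.symm ▸ hq)), mul_zero]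
    have e2 : ∑ k, N p k * M k q = 0 := Finset.sum_eq_zero fun k _ => hR k
    rw [e1, e2, hN p q (Or.inr fun h => hdisj _ ⟨hq, h⟩), if_neg fun h : p = q => hp (h.symm ▸ hq)]
  · have hL : ∀ k, M p k = if p = k then (1:ℂ) else 0 := fun k => hM p k (Or.inl hp)
    have hR : ∀ k, M k q = if k = q then (1:ℂ) else 0 := fun k => hM k q (Or.inr hq)
    simp [hL, hR]

lemma SFM_zero_id (m n r : ℕ) (hm : 2 ≤ m)
    (A : Fin (m + 1) → Matrix (Fin n) (Fin n) ℂ)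
    (B : Matrix (Fin n) (Fin r) ℂ) (C : Matrix (Fin r) (Fin n) ℂ)
    (D : Matrix (Fin r) (Fin r) ℂ) :
    ∀ p q, (¬(sIdx m n r p = m - 1 ∨ sIdx m n r p = m) ∨
            ¬(sIdx m n r q = m - 1 ∨ sIdx m n r q = m)) →
      SFM m n r A B C D 0 p q = if p = q then 1 else 0 := by
  intro p q h
  unfold SFM
  rw [if_pos rfl]
  rcases p with p | p <;> rcases q with q | q
  · simp only [sIdx] at h
    simp only [Matrix.fromBlocks_apply₁₁, FM, Matrix.of_apply, if_pos rfl]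
    by_cases hpq : p.1 = q.1
    · have hp1 : ¬((p.1:ℕ) = m - 1) := by
        rcases h with h | h
        · exact fun hc => h (Or.inl hc)
        · rw [show (p.1:ℕ) = (q.1:ℕ) from congrArg Fin.val hpq]
          exact fun hc => h (Or.inl hc)
      rw [if_pos hpq, if_neg hp1]
      simp [Matrix.one_apply, Prod.ext_iff, hpq]
    · rw [if_neg hpq]
      simp [Prod.ext_iff, hpq]
  · have hp1 : ¬((p.1:ℕ) + 1 = m) := by
      simp only [sIdx] at h
      rcases h with h | h
      · push_neg at h; omega
      · exact absurd (Or.inr trivial) h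
    simp [eB, hp1]
  · have hq1 : ¬((q.1:ℕ) + 1 = m) := by
      simp only [sIdx] at h
      rcases h with h | h
      · exact absurd (Or.inr trivial) h
      · push_neg at h; omega
    simp [eC, hq1]
  · simp only [sIdx] at h
    rcases h with h | h <;> exact absurd (Or.inr trivial) h

lemma SFM_top_id (m n r : ℕ) (hm : 2 ≤ m)
    (A : Fin (m + 1) → Matrix (Fin n) (Fin n) ℂ)
    (B : Matrix (Fin n) (Fin r) ℂ) (C : Matrix (Fin r) (Fin n) ℂ)
    (D : Matrix (Fin r) (Fin r) ℂ) :
    ∀ p q, (¬(sIdx m n r p = 0 ∨ sIdx m n r p = m) ∨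
            ¬(sIdx m n r q = 0 ∨ sIdx m n r q = m)) →
      SFM m n r A B C D m p q = if p = q then 1 else 0 := by
  intro p q h
  unfold SFM
  rw [if_neg (by omega : m ≠ 0), if_pos rfl]
  rcases p with p | p <;> rcases q with q | q
  · simp only [sIdx] at h
    simp only [Matrix.fromBlocks_apply₁₁, FM, Matrix.of_apply,
      if_neg (by omega : m ≠ 0), if_pos rfl]
    by_cases hpq : p.1 = q.1
    · have hp1 : ¬((p.1:ℕ) = 0) := by
        rcases h with h | h
        · exact fun hc => h (Or.inl hc)
        · rw [show (p.1:ℕ) = (q.1:ℕ) from congrArg Fin.val hpq]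
          exact fun hc => h (Or.inl hc)
      rw [if_pos hpq, if_neg hp1]
      simp [Matrix.one_apply, Prod.ext_iff, hpq]
    · rw [if_neg hpq]
      simp [Prod.ext_iff, hpq]
  · simp
  · simp
  · simp only [sIdx] at h
    rcases h with h | h <;> exact absurd (Or.inr trivial) h

lemma SFM_mid_id (m n r : ℕ) (hm : 2 ≤ m)
    (A : Fin (m + 1) → Matrix (Fin n) (Fin n) ℂ)
    (B : Matrix (Fin n) (Fin r) ℂ) (C : Matrix (Fin r) (Fin n) ℂ)
    (D : Matrix (Fin r) (Fin r) ℂ)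
    (i : ℕ) (hi0 : i ≠ 0) (him : i < m) :
    ∀ p q, (¬(sIdx m n r p = m - i - 1 ∨ sIdx m n r p = m - i) ∨
            ¬(sIdx m n r q = m - i - 1 ∨ sIdx m n r q = m - i)) →
      SFM m n r A B C D i p q = if p = q then 1 else 0 := by
  intro p q h
  unfold SFM
  rw [if_neg hi0, if_neg (Nat.ne_of_lt him)]
  rcases p with p | p <;> rcases q with q | q
  · simp only [sIdx] at h
    simp only [Matrix.fromBlocks_apply₁₁, FM, Matrix.of_apply, if_neg hi0,
      if_neg (Nat.ne_of_lt him)]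
    have h1 : ¬((p.1:ℕ) = m - i - 1 ∧ (q.1:ℕ) = m - i - 1) := by
      rcases h with h | h
      · exact fun hc => h (Or.inl hc.1)
      · exact fun hc => h (Or.inl hc.2)
    have h2 : ¬((p.1:ℕ) = m - i - 1 ∧ (q.1:ℕ) = m - i) := by
      rcases h with h | h
      · exact fun hc => h (Or.inl hc.1)
      · exact fun hc => h (Or.inr hc.2)
    have h3 : ¬((p.1:ℕ) = m - i ∧ (q.1:ℕ) = m - i - 1) := by
      rcases h with h | h
      · exact fun hc => h (Or.inr hc.1)
      · exact fun hc => h (Or.inl hc.2)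
    have h4 : ¬((p.1:ℕ) = m - i ∧ (q.1:ℕ) = m - i) := by
      rcases h with h | h
      · exact fun hc => h (Or.inr hc.1)
      · exact fun hc => h (Or.inr hc.2)
    rw [if_neg h1, if_neg h2, if_neg h3, if_neg h4]
    by_cases hpq : p.1 = q.1
    · rw [if_pos hpq]
      simp [Matrix.one_apply, Prod.ext_iff, hpq]
    · rw [if_neg hpq]
      simp [Prod.ext_iff, hpq]
  · simp
  · simp
  · simp [Matrix.one_apply]

/-- for `i, j ∈ {0, 1, …, m}` with `|i − j| > 1` and `{i, j} ≠ {0, m}`, the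
Fiedler matrices of the system matrix commute: `𝕄_i 𝕄_j = 𝕄_j 𝕄_i`. -/
theorem stmt18 (m n r : ℕ) (hm : 2 ≤ m) (hn : 1 ≤ n) (hr : 1 ≤ r)
    (A : Fin (m + 1) → Matrix (Fin n) (Fin n) ℂ)
    (B : Matrix (Fin n) (Fin r) ℂ) (C : Matrix (Fin r) (Fin n) ℂ)
    (D : Matrix (Fin r) (Fin r) ℂ) :
    ∀ i j : ℕ, i ≤ m → j ≤ m → (i + 1 < j ∨ j + 1 < i) →
      ¬(i = 0 ∧ j = m) → ¬(i = m ∧ j = 0) →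
      SFM m n r A B C D i * SFM m n r A B C D j =
        SFM m n r A B C D j * SFM m n r A B C D i := by
  have main : ∀ i j : ℕ, i ≤ m → j ≤ m → i + 1 < j → ¬(i = 0 ∧ j = m) →
      SFM m n r A B C D i * SFM m n r A B C D j =
        SFM m n r A B C D j * SFM m n r A B C D i := by
    intro i j hi hj hij h0
    by_cases hi0 : i = 0
    · subst hi0
      have hjm : j < m := lt_of_le_of_ne hj (fun h => h0 ⟨rfl, h⟩)
      have hj0 : j ≠ 0 := by omega
      exact aux_comm (sIdx m n r)
        (fun x => x = m - 1 ∨ x = m) (fun x => x = m - j - 1 ∨ x = m - j)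
        (fun x hx => by omega) _ _
        (SFM_zero_id m n r hm A B C D) (SFM_mid_id m n r hm A B C D j hj0 hjm)
    · by_cases hjm : j = m
      · rw [hjm]
        have him : i < m := by omega
        exact aux_comm (sIdx m n r)
          (fun x => x = m - i - 1 ∨ x = m - i) (fun x => x = 0 ∨ x = m)
          (fun x hx => by omega) _ _
          (SFM_mid_id m n r hm A B C D i hi0 him) (SFM_top_id m n r hm A B C D)
      · have him : i < m := by omega
        have hjm' : j < m := lt_of_le_of_ne hj hjm
        have hj0 : j ≠ 0 := by omega
        exact aux_comm (sIdx m n r)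
          (fun x => x = m - i - 1 ∨ x = m - i) (fun x => x = m - j - 1 ∨ x = m - j)
          (fun x hx => by omega) _ _
          (SFM_mid_id m n r hm A B C D i hi0 him) (SFM_mid_id m n r hm A B C D j hj0 hjm')
  intro i j hi hj hij h1 h2
  rcases hij with h | h
  · exact main i j hi hj h h1
  · exact (main j i hj hi h (fun hc => h2 ⟨hc.2, hc.1⟩)).symm

end
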